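/- Let n ≥ 1, let Ω ⊂ ℝⁿ be a bounded domain, ε > 0, and let A, B ⊆ ℝⁿ be disjoint measurable sets such that dist(A ∩ Ω, B) ≥ ε and dist(A, B ∩ Ω) ≥ ε. Then lim_{s↗1} (1−s) Per^s_Ω(A, B) = 0. -/

import Mathlib

open MeasureTheory Filter ENNReal

/-- The nonlocal interaction `L^s(A,B) = ∫_A ∫_B |x-y|^{-(n+s)} dy dx ∈ [0,∞]`. -/
noncomputable def Ls (n : ℕ) (s : ℝ) (A B : Set (EuclideanSpace ℝ (Fin n))) : ℝ≥0∞ :=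
  ∫⁻ x in A, ∫⁻ y in B, ENNReal.ofReal (1 / ‖x - y‖ ^ ((n : ℝ) + s))

/-- The nonlocal area `Per^s_Ω(A,B)`. -/
noncomputable def nlArea (n : ℕ) (s : ℝ) (Ω A B : Set (EuclideanSpace ℝ (Fin n))) : ℝ≥0∞ :=
  Ls n s (A ∩ Ω) (B ∩ Ω) + Ls n s (A ∩ Ω) (B ∩ Ωᶜ) + Ls n s (A ∩ Ωᶜ) (B ∩ Ω)

/-- The fractional `s`-perimeter `Per^s_Ω(E) = Per^s_Ω(E, Eᶜ)`. -/
noncomputable def nlPer (n : ℕ) (s : ℝ) (Ω E : Set (EuclideanSpace ℝ (Fin n))) : ℝ≥0∞ :=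
  nlArea n s Ω E Eᶜ

lemma kernelMeas (n : ℕ) (s : ℝ) (hns : 0 ≤ (n : ℝ) + s) :
    Measurable (fun p : EuclideanSpace ℝ (Fin n) × EuclideanSpace ℝ (Fin n) =>
      ENNReal.ofReal (1 / ‖p.1 - p.2‖ ^ ((n : ℝ) + s))) := by
  apply ENNReal.measurable_ofReal.comp
  simp_rw [one_div]
  exact (((continuous_fst.sub continuous_snd).norm.rpow_const
    (fun x => Or.inr hns)).measurable).inv

lemma Ls_comm (n : ℕ) (s : ℝ) (hns : 0 ≤ (n : ℝ) + s) (A B : Set (EuclideanSpace ℝ (Fin n))) :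
    Ls n s A B = Ls n s B A := by
  unfold Ls
  rw [lintegral_lintegral_swap ((kernelMeas n s hns).aemeasurable)]
  simp_rw [norm_sub_rev]

lemma kernel_bound {ε t : ℝ} (hε : 0 < ε) (hεt : ε ≤ t) (n : ℕ) {s : ℝ}
    (hs : 1/2 ≤ s) (hs1 : s ≤ 1) :
    1 / t ^ ((n : ℝ) + s) ≤ (1 + 1/ε) ^ ((n : ℝ) + 1) * (1 + t) ^ (-((n : ℝ) + 1/2)) := by
  have ht : 0 < t := hε.trans_le hεt
  have h1t : (0:ℝ) < 1 + t := by linarith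
  have hinv : (0:ℝ) < 1/ε := by positivity
  have hbase : (1:ℝ) ≤ 1 + 1/ε := by linarith
  set r : ℝ := (n : ℝ) + s with hr
  have hr0 : (0:ℝ) ≤ r := by positivity
  have h1 : 1 + t ≤ (1 + 1/ε) * t := by
    have hd : 1 ≤ t / ε := (one_le_div hε).mpr hεt
    have h2 : t / ε = t * (1/ε) := by ring
    nlinarith
  have h2 : (1 + t) ^ r ≤ (1 + 1/ε) ^ r * t ^ r := by
    rw [← Real.mul_rpow (by positivity) ht.le]
    exact Real.rpow_le_rpow h1t.le h1 hr0
  have step1 : 1 / t ^ r ≤ (1 + 1/ε) ^ r * (1 + t) ^ (-r) := by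
    rw [Real.rpow_neg h1t.le, ← div_eq_mul_inv,
      div_le_div_iff₀ (by positivity) (by positivity)]
    rw [one_mul]
    exact h2
  refine step1.trans (mul_le_mul ?_ ?_ (by positivity) (by positivity))
  · exact Real.rpow_le_rpow_of_exponent_le hbase (by rw [hr]; linarith)
  · refine Real.rpow_le_rpow_of_exponent_le (by linarith) ?_
    rw [neg_le_neg_iff, hr]
    linarith

lemma Ls_le (n : ℕ) {s ε : ℝ} (hε : 0 < ε) (hs : 1/2 ≤ s) (hs1 : s ≤ 1)
    {S T : Set (EuclideanSpace ℝ (Fin n))} (hS : MeasurableSet S) (hT : MeasurableSet T)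
    (hsep : ∀ x ∈ S, ∀ y ∈ T, ε ≤ dist x y) :
    Ls n s S T ≤ (ENNReal.ofReal ((1 + 1/ε) ^ ((n : ℝ) + 1)) *
      ∫⁻ z : EuclideanSpace ℝ (Fin n), ENNReal.ofReal ((1 + ‖z‖) ^ (-((n : ℝ) + 1/2)))) *
      volume S := by
  set K : ℝ≥0∞ := ENNReal.ofReal ((1 + 1/ε) ^ ((n : ℝ) + 1)) *
      ∫⁻ z : EuclideanSpace ℝ (Fin n), ENNReal.ofReal ((1 + ‖z‖) ^ (-((n : ℝ) + 1/2))) with hK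
  have inner : ∀ x ∈ S, (∫⁻ y in T, ENNReal.ofReal (1 / ‖x - y‖ ^ ((n : ℝ) + s))) ≤ K := by
    intro x hx
    calc (∫⁻ y in T, ENNReal.ofReal (1 / ‖x - y‖ ^ ((n : ℝ) + s)))
        ≤ ∫⁻ y in T, ENNReal.ofReal
            ((1 + 1/ε) ^ ((n : ℝ) + 1) * (1 + ‖x - y‖) ^ (-((n : ℝ) + 1/2))) := by
          refine setLIntegral_mono' hT (fun y hy => ENNReal.ofReal_le_ofReal ?_)
          have hd : ε ≤ ‖x - y‖ := by rw [← dist_eq_norm]; exact hsep x hx y hy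
          exact kernel_bound hε hd n hs hs1
      _ ≤ ∫⁻ y, ENNReal.ofReal
            ((1 + 1/ε) ^ ((n : ℝ) + 1) * (1 + ‖x - y‖) ^ (-((n : ℝ) + 1/2))) :=
          setLIntegral_le_lintegral _ _
      _ = ENNReal.ofReal ((1 + 1/ε) ^ ((n : ℝ) + 1)) *
            ∫⁻ y, ENNReal.ofReal ((1 + ‖x - y‖) ^ (-((n : ℝ) + 1/2))) := by
          simp_rw [ENNReal.ofReal_mul (by positivity : (0:ℝ) ≤ (1 + 1/ε) ^ ((n : ℝ) + 1))]
          exact lintegral_const_mul' _ _ ENNReal.ofReal_ne_top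
      _ = K := by
          rw [hK]
          congr 1
          simp_rw [norm_sub_rev x]
          exact lintegral_sub_right_eq_self
            (fun z => ENNReal.ofReal ((1 + ‖z‖) ^ (-((n : ℝ) + 1/2)))) x
  calc Ls n s S T ≤ ∫⁻ _ in S, K := setLIntegral_mono' hS inner
    _ = K * volume S := setLIntegral_const S K

/-- If the disjoint sets `A`, `B` satisfy `dist(A∩Ω, B) ≥ ε` and `dist(A, B∩Ω) ≥ ε`, then
`(1−s) Per^s_Ω(A,B) → 0` as `s ↗ 1`. -/
theorem tendsto_one_sub_smul_nlArea_of_separated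
    (n : ℕ) (hn : 1 ≤ n)
    (Ω : Set (EuclideanSpace ℝ (Fin n))) (hΩo : IsOpen Ω) (hΩconn : IsConnected Ω)
    (hΩb : Bornology.IsBounded Ω)
    (ε : ℝ) (hε : 0 < ε)
    (A B : Set (EuclideanSpace ℝ (Fin n))) (hA : MeasurableSet A) (hB : MeasurableSet B)
    (hAB : Disjoint A B)
    (hsep1 : ∀ x ∈ A ∩ Ω, ∀ y ∈ B, ε ≤ dist x y)
    (hsep2 : ∀ x ∈ A, ∀ y ∈ B ∩ Ω, ε ≤ dist x y) :
    Tendsto (fun s : ℝ => ENNReal.ofReal (1 - s) * nlArea n s Ω A B)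
      (nhdsWithin 1 (Set.Ioo (0 : ℝ) 1)) (nhds 0) := by
  have hΩm : MeasurableSet Ω := hΩo.measurableSet
  set I : ℝ≥0∞ :=
    ∫⁻ z : EuclideanSpace ℝ (Fin n), ENNReal.ofReal ((1 + ‖z‖) ^ (-((n : ℝ) + 1/2))) with hI
  have hIfin : I < ⊤ := by
    apply finite_integral_one_add_norm
    rw [finrank_euclideanSpace_fin]
    linarith
  set K : ℝ≥0∞ := ENNReal.ofReal ((1 + 1/ε) ^ ((n : ℝ) + 1)) * I with hK
  have hKfin : K ≠ ⊤ := ENNReal.mul_ne_top ENNReal.ofReal_ne_top hIfin.ne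
  set M : ℝ≥0∞ := K * volume Ω with hM
  have hMfin : M ≠ ⊤ := ENNReal.mul_ne_top hKfin hΩb.measure_lt_top.ne
  set C : ℝ≥0∞ := M + M + M with hC
  have hCfin : C ≠ ⊤ :=
    ENNReal.add_ne_top.mpr ⟨ENNReal.add_ne_top.mpr ⟨hMfin, hMfin⟩, hMfin⟩
  have hbound : ∀ s : ℝ, 1/2 ≤ s → s ≤ 1 → nlArea n s Ω A B ≤ C := by
    intro s h1 h2
    have t1 : Ls n s (A ∩ Ω) (B ∩ Ω) ≤ M := by
      refine (Ls_le n hε h1 h2 (hA.inter hΩm) (hB.inter hΩm)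
        (fun x hx y hy => hsep1 x hx y hy.1)).trans ?_
      exact mul_le_mul_right (measure_mono Set.inter_subset_right) K
    have t2 : Ls n s (A ∩ Ω) (B ∩ Ωᶜ) ≤ M := by
      refine (Ls_le n hε h1 h2 (hA.inter hΩm) (hB.inter hΩm.compl)
        (fun x hx y hy => hsep1 x hx y hy.1)).trans ?_
      exact mul_le_mul_right (measure_mono Set.inter_subset_right) K
    have t3 : Ls n s (A ∩ Ωᶜ) (B ∩ Ω) ≤ M := by
      rw [Ls_comm n s (by positivity)]
      refine (Ls_le n hε h1 h2 (hB.inter hΩm) (hA.inter hΩm.compl)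
        (fun y hy x hx => by rw [dist_comm]; exact hsep2 x hx.1 y hy)).trans ?_
      exact mul_le_mul_right (measure_mono Set.inter_subset_right) K
    exact add_le_add (add_le_add t1 t2) t3
  have hupper : Tendsto (fun s : ℝ => ENNReal.ofReal (1 - s) * C)
      (nhdsWithin 1 (Set.Ioo (0:ℝ) 1)) (nhds 0) := by
    have h0 : Tendsto (fun s : ℝ => ENNReal.ofReal (1 - s)) (nhds 1) (nhds 0) := by
      have hr : Tendsto (fun s : ℝ => (1 - s : ℝ)) (nhds 1) (nhds 0) := by
        have hc : Continuous (fun s : ℝ => 1 - s) := by continuity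
        simpa using hc.tendsto 1
      simpa [Function.comp_def] using (ENNReal.continuous_ofReal.tendsto 0).comp hr
    simpa using ENNReal.Tendsto.mul_const (h0.mono_left nhdsWithin_le_nhds) (Or.inr hCfin)
  refine tendsto_of_tendsto_of_tendsto_of_le_of_le' tendsto_const_nhds hupper
    (Eventually.of_forall fun s => zero_le) ?_
  have h₁ : ∀ᶠ s : ℝ in nhdsWithin 1 (Set.Ioo (0:ℝ) 1), 1/2 < s :=
    (eventually_gt_nhds (by norm_num)).filter_mono nhdsWithin_le_nhds
  have h₂ : ∀ᶠ s : ℝ in nhdsWithin 1 (Set.Ioo (0:ℝ) 1), s ∈ Set.Ioo (0:ℝ) 1 :=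
    eventually_mem_nhdsWithin
  filter_upwards [h₁, h₂] with s hs1 hs2
  exact mul_le_mul_right (hbound s hs1.le hs2.2.le) _
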